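/- Let r be a positive integer and let a = (a_1,…,a_r) be a tuple of positive integers, with non-decreasing rearrangement ã_1 ≤ ã_2 ≤ … ≤ ã_r. Then |𝓛*(a)| ≤ min_{0 ≤ j ≤ r} 2^{r-j} · ( ã_1 + ã_2 + … + ã_j + 1 ). -/

import Mathlib

open scoped BigOperators

noncomputable section

/-- The set `𝓛*(a) = { Σ_{i∈I} a_i : I ⊆ {1,…,r} }` of subset sums of `a`. -/
def Lstar (r : ℕ) (a : Fin r → ℕ) : Finset ℕ :=
  (Finset.univ : Finset (Finset (Fin r))).image fun I => ∑ i ∈ I, a i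

theorem Lstar_card_le (r : ℕ) (hr : 0 < r) (a : Fin r → ℕ) (ha : ∀ i, 0 < a i)
    (σ : Equiv.Perm (Fin r)) (hσ : Monotone (a ∘ σ)) :
    ∀ j ≤ r,
      (Lstar r a).card ≤
        2 ^ (r - j) *
          ((∑ i ∈ Finset.univ.filter fun i : Fin r => (i : ℕ) < j, a (σ i)) + 1) := by
  intro j hj
  set S : ℕ := ∑ i ∈ Finset.univ.filter fun i : Fin r => (i : ℕ) < j, a (σ i) with hS
  set g : Finset (Fin r) → Finset (Fin r) × ℕ :=
    fun I => (I.filter (fun i => ¬ ((σ.symm i : Fin r) : ℕ) < j),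
      ∑ i ∈ I.filter (fun i => ((σ.symm i : Fin r) : ℕ) < j), a i) with hg
  have hfactor : Lstar r a =
      (Finset.univ : Finset (Finset (Fin r))).image
        ((fun p : Finset (Fin r) × ℕ => (∑ i ∈ p.1, a i) + p.2) ∘ g) := by
    unfold Lstar
    apply Finset.image_congr
    intro I _
    simp only [Function.comp, hg]
    rw [Nat.add_comm, Finset.sum_filter_add_sum_filter_not]
  have hSeq : ∑ i ∈ Finset.univ.filter (fun i => ((σ.symm i : Fin r) : ℕ) < j), a i = S := by
    rw [hS]
    refine (Finset.sum_equiv σ (fun i => ?_) (fun i _ => rfl)).symm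
    simp
  have hgmem : ∀ I : Finset (Fin r),
      g I ∈ (Finset.univ.filter (fun i => ¬ ((σ.symm i : Fin r) : ℕ) < j)).powerset
        ×ˢ Finset.range (S + 1) := by
    intro I
    rw [Finset.mem_product]
    constructor
    · simp only [Finset.mem_powerset, hg]
      intro i hi
      simp only [Finset.mem_filter] at hi ⊢
      exact ⟨Finset.mem_univ i, hi.2⟩
    · simp only [Finset.mem_range, hg, Nat.lt_succ_iff]
      rw [← hSeq]
      exact Finset.sum_le_sum_of_subset (by
        intro i hi
        simp only [Finset.mem_filter] at hi ⊢
        exact ⟨Finset.mem_univ i, hi.2⟩)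
  have hlt : (Finset.univ.filter (fun i : Fin r => (i : ℕ) < j)).card = j := by
    rw [Finset.card_bij (fun (i : Fin r) _ => (i : ℕ))
      (fun i hi => by simpa using (Finset.mem_filter.mp hi).2)
      (fun i _ i' _ h => Fin.val_injective h)
      (fun n hn => ⟨⟨n, lt_of_lt_of_le (Finset.mem_range.mp hn) hj⟩,
        by simpa using Finset.mem_range.mp hn, rfl⟩), Finset.card_range]
  have hcardbig :
      (Finset.univ.filter (fun i => ¬ ((σ.symm i : Fin r) : ℕ) < j)).card = r - j := by
    have h1 : (Finset.univ.filter (fun i => ¬ ((σ.symm i : Fin r) : ℕ) < j)).card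
        = (Finset.univ.filter (fun i : Fin r => ¬ ((i : ℕ) < j))).card := by
      refine Finset.card_equiv σ.symm (fun i => ?_)
      simp
    have h2 := Finset.card_filter_add_card_filter_not
      (s := (Finset.univ : Finset (Fin r))) (p := fun i : Fin r => (i : ℕ) < j)
    rw [hlt, Finset.card_univ, Fintype.card_fin] at h2
    omega
  calc (Lstar r a).card
      ≤ ((Finset.univ : Finset (Finset (Fin r))).image g).card := by
        rw [hfactor, ← Finset.image_image]
        exact Finset.card_image_le
    _ ≤ ((Finset.univ.filter (fun i => ¬ ((σ.symm i : Fin r) : ℕ) < j)).powerset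
          ×ˢ Finset.range (S + 1)).card := by
        apply Finset.card_le_card
        intro p hp
        obtain ⟨I, _, rfl⟩ := Finset.mem_image.mp hp
        exact hgmem I
    _ = 2 ^ (r - j) * (S + 1) := by
        rw [Finset.card_product, Finset.card_powerset, Finset.card_range, hcardbig]
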